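/- Suppose C ⊆ F_q^{9×m} with m ≥ 9 is an F_q-linear rank-metric code representing the non-Pappus q-matroid. Then the number of codewords of rank 6 in C equals 8(q^m - 1), and the number of codewords of rank 7 equals (q^m - 1)·(gaussbinom(9,2,q) - 8·gaussbinom(3,1,q)). -/

import Mathlib

open Matrix

variable {F : Type*} [Field F]

/-- Column space of a matrix: the span of its columns. -/
def colSpace {n m : ℕ} (M : Matrix (Fin n) (Fin m) F) : Submodule F (Fin n → F) :=
  Submodule.span F (Set.range Mᵀ)

lemma colSpace_le_iff {n m : ℕ} (M : Matrix (Fin n) (Fin m) F) (U : Submodule F (Fin n → F)) :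
    colSpace M ≤ U ↔ ∀ j, Mᵀ j ∈ U := by
  rw [colSpace, Submodule.span_le]
  exact ⟨fun h j => h ⟨j, rfl⟩, fun h _ ⟨j, hj⟩ => hj ▸ h j⟩

/-- `C(U)`: the codewords of `C` whose column space is contained in `U`. -/
def codeCU {n m : ℕ} (C : Submodule F (Matrix (Fin n) (Fin m) F))
    (U : Submodule F (Fin n → F)) : Submodule F (Matrix (Fin n) (Fin m) F) where
  carrier := {M | M ∈ C ∧ colSpace M ≤ U}
  add_mem' := by
    rintro a b ⟨haC, ha⟩ ⟨hbC, hb⟩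
    refine ⟨C.add_mem haC hbC, (colSpace_le_iff _ _).2 fun j => ?_⟩
    have h := U.add_mem ((colSpace_le_iff a U).1 ha j) ((colSpace_le_iff b U).1 hb j)
    rw [Matrix.transpose_add]
    first | exact h | (convert h using 1; ext i; simp)
  zero_mem' := by
    exact ⟨C.zero_mem, (colSpace_le_iff _ _).2 fun j => U.zero_mem⟩
  smul_mem' := by
    rintro c a ⟨haC, ha⟩
    refine ⟨C.smul_mem c haC, (colSpace_le_iff _ _).2 fun j => ?_⟩
    have h := U.smul_mem c ((colSpace_le_iff a U).1 ha j)
    rw [Matrix.transpose_smul]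
    first | exact h | (convert h using 1; ext i; simp)

/-- Orthogonal complement with respect to the standard (dot-product) bilinear form. -/
def perp {n : ℕ} (U : Submodule F (Fin n → F)) : Submodule F (Fin n → F) where
  carrier := {v | ∀ u ∈ U, v ⬝ᵥ u = 0}
  add_mem' := by
    intro a b ha hb u hu
    rw [add_dotProduct, ha u hu, hb u hu, add_zero]
  zero_mem' := by
    intro u hu
    rw [zero_dotProduct]
  smul_mem' := by
    intro c a ha u hu
    rw [smul_dotProduct, ha u hu, smul_zero]

/-- The minimum rank distance of a matrix code. -/
noncomputable def minRankDist {n m : ℕ} (C : Submodule F (Matrix (Fin n) (Fin m) F)) : ℕ :=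
  sInf {r : ℕ | ∃ M ∈ C, M ≠ 0 ∧ M.rank = r}

/-- The rank function of the q-polymatroid associated to a matrix rank-metric code. -/
noncomputable def rhoCode {n m : ℕ} (C : Submodule F (Matrix (Fin n) (Fin m) F))
    (U : Submodule F (Fin n → F)) : ℚ :=
  ((Module.finrank F C : ℚ) - (Module.finrank F (codeCU C (perp U)) : ℚ)) / (m : ℚ)

/-- The coordinate 3-space spanned by `e_a, e_b, e_c` in `F_q^9`. -/
def tri (a b c : Fin 9) : Submodule F (Fin 9 → F) :=
  Submodule.span F {Pi.single a 1, Pi.single b 1, Pi.single c 1}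

/-- The eight special 3-spaces of the non-Pappus q-matroid. -/
def NPset : Set (Submodule F (Fin 9 → F)) :=
  {tri 0 1 2, tri 0 5 7, tri 0 4 6, tri 1 3 6, tri 1 5 8, tri 2 3 7, tri 2 4 8, tri 3 4 5}

open scoped Classical in
/-- The rank function of the non-Pappus q-matroid. -/
noncomputable def rhoNP (U : Submodule F (Fin 9 → F)) : ℚ :=
  if U ∈ (NPset : Set (Submodule F (Fin 9 → F))) then 2
  else if Module.finrank F U ≤ 3 then (Module.finrank F U : ℚ) else 3

/-- Gaussian binomial coefficient, via the q-Pascal recursion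
`[n+1, k+1]_q = [n, k]_q + q^(k+1) [n, k+1]_q`. -/
def gaussBinom : ℕ → ℕ → ℕ → ℕ
  | _, 0, _ => 1
  | 0, _ + 1, _ => 0
  | n + 1, k + 1, q => gaussBinom n k q + q ^ (k + 1) * gaussBinom n (k + 1) q

section Perp
open Module Submodule LinearMap

variable {n : ℕ}

/-- The standard dot-product bilinear form. -/
noncomputable def dotForm (n : ℕ) : LinearMap.BilinForm F (Fin n → F) :=
  LinearMap.mk₂ F (· ⬝ᵥ ·) (fun a b c => add_dotProduct a b c)
    (fun r a b => smul_dotProduct r a b) (fun a b c => dotProduct_add a b c)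
    (fun r a b => dotProduct_smul r a b)

lemma dotForm_apply (v u : Fin n → F) : dotForm n v u = v ⬝ᵥ u := rfl

lemma dotForm_refl : (dotForm (F := F) n).IsRefl := by
  intro v u h
  rw [dotForm_apply, dotProduct_comm] at h
  exact h

lemma dotForm_nondeg : (dotForm (F := F) n).Nondegenerate := by
  constructor <;> intro v hv <;> funext i
  · have := hv (Pi.single i 1)
    rwa [dotForm_apply, dotProduct_single, mul_one] at this
  · have := hv (Pi.single i 1)
    rwa [dotForm_apply, single_dotProduct, one_mul] at this

lemma perp_eq_orthogonal (U : Submodule F (Fin n → F)) :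
    perp U = (dotForm n).orthogonal U := by
  ext v
  constructor
  · intro hv u hu
    have := hv u hu
    rwa [dotForm_apply, dotProduct_comm]
  · intro hv u hu
    have := hv u hu
    rwa [dotForm_apply, dotProduct_comm] at this

lemma finrank_perp (U : Submodule F (Fin n → F)) :
    finrank F (perp U) = n - finrank F U := by
  rw [perp_eq_orthogonal, LinearMap.BilinForm.finrank_orthogonal dotForm_nondeg,
    Module.finrank_pi]
  simp

lemma perp_perp (U : Submodule F (Fin n → F)) : perp (perp U) = U := by
  rw [perp_eq_orthogonal, perp_eq_orthogonal,
    LinearMap.BilinForm.orthogonal_orthogonal dotForm_nondeg dotForm_refl]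

lemma perp_antitone {U V : Submodule F (Fin n → F)} (h : U ≤ V) : perp V ≤ perp U :=
  fun v hv u hu => hv u (h hu)

lemma le_perp_iff {U V : Submodule F (Fin n → F)} : U ≤ perp V ↔ V ≤ perp U := by
  constructor <;> intro h v hv u hu
  · rw [dotProduct_comm]; exact h hu v hv
  · rw [dotProduct_comm]; exact h hu v hv

lemma perp_le_perp_iff {U V : Submodule F (Fin n → F)} : perp U ≤ perp V ↔ V ≤ U := by
  constructor
  · intro h
    have := perp_antitone h
    rwa [perp_perp, perp_perp] at this
  · exact perp_antitone

lemma perp_inj {U V : Submodule F (Fin n → F)} (h : perp U = perp V) : U = V := by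
  have := congrArg perp h
  rwa [perp_perp, perp_perp] at this

lemma perp_sup (U V : Submodule F (Fin n → F)) :
    perp (U ⊔ V) = perp U ⊓ perp V := by
  apply le_antisymm
  · exact le_inf (perp_antitone le_sup_left) (perp_antitone le_sup_right)
  · rintro v ⟨h1, h2⟩ u hu
    obtain ⟨x, hx, y, hy, rfl⟩ := Submodule.mem_sup.1 hu
    rw [dotProduct_add, h1 x hx, h2 y hy, add_zero]

lemma perp_top : perp (⊤ : Submodule F (Fin n → F)) = ⊥ := by
  ext v
  simp only [Submodule.mem_bot]
  constructor
  · intro hv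
    funext i
    have := hv (Pi.single i 1) trivial
    rwa [dotProduct_single, mul_one] at this
  · rintro rfl u _
    rw [zero_dotProduct]

end Perp


section Tri
open Module Submodule

lemma single_one_injective {n : ℕ} :
    Function.Injective (fun i : Fin n => (Pi.single i 1 : Fin n → F)) := by
  intro i j h
  by_contra hne
  have h2 := congrFun h i
  simp only at h2
  rw [Pi.single_eq_same, Pi.single_eq_of_ne hne] at h2
  exact one_ne_zero h2

lemma finrank_span_singles {n : ℕ} (s : Finset (Fin n)) :
    finrank F (span F ((fun i => (Pi.single i 1 : Fin n → F)) '' ↑s)) = s.card := by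
  classical
  have hli : LinearIndependent F (fun i : Fin n => (Pi.single i 1 : Fin n → F)) := by
    rw [Fintype.linearIndependent_iff]
    intro g hg j
    have h := congrFun hg j
    simpa [Pi.single_apply, Finset.sum_apply] using h
  have hres : LinearIndependent F
      (fun i : (↑s : Set (Fin n)) => (Pi.single (i : Fin n) 1 : Fin n → F)) :=
    hli.comp _ Subtype.coe_injective
  rw [Set.image_eq_range, finrank_span_eq_card hres, ← Set.toFinset_card, Finset.toFinset_coe]

lemma tri_eq_span (a b c : Fin 9) :
    (tri a b c : Submodule F (Fin 9 → F)) =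
      span F ((fun i => (Pi.single i 1 : Fin 9 → F)) '' ↑({a, b, c} : Finset (Fin 9))) := by
  rw [tri]
  congr 1
  simp [Set.image_insert_eq]

lemma finrank_tri (a b c : Fin 9) :
    finrank F (tri a b c : Submodule F (Fin 9 → F)) = ({a, b, c} : Finset (Fin 9)).card := by
  rw [tri_eq_span, finrank_span_singles]

lemma finrank_tri_sup (a b c d e f : Fin 9) :
    finrank F ((tri a b c ⊔ tri d e f : Submodule F (Fin 9 → F))) =
      (({a, b, c} : Finset (Fin 9)) ∪ {d, e, f}).card := by
  rw [tri_eq_span, tri_eq_span, ← Submodule.span_union, ← Set.image_union]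
  rw [← Finset.coe_union, finrank_span_singles]

lemma mem_NPset_finrank {X : Submodule F (Fin 9 → F)} (hX : X ∈ (NPset : Set _)) :
    finrank F X = 3 := by
  simp only [NPset, Set.mem_insert_iff, Set.mem_singleton_iff] at hX
  rcases hX with rfl | rfl | rfl | rfl | rfl | rfl | rfl | rfl <;>
    rw [finrank_tri] <;> decide

lemma not_mem_NPset {U : Submodule F (Fin 9 → F)} (h : finrank F U ≠ 3) :
    U ∉ (NPset : Set _) := fun hU => h (mem_NPset_finrank hU)

lemma NPset_sup {X Y : Submodule F (Fin 9 → F)} (hX : X ∈ (NPset : Set _))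
    (hY : Y ∈ (NPset : Set _)) (hne : X ≠ Y) : 5 ≤ finrank F (X ⊔ Y : Submodule F _) := by
  simp only [NPset, Set.mem_insert_iff, Set.mem_singleton_iff] at hX hY
  rcases hX with rfl | rfl | rfl | rfl | rfl | rfl | rfl | rfl <;>
    rcases hY with rfl | rfl | rfl | rfl | rfl | rfl | rfl | rfl <;>
    first
      | exact absurd rfl hne
      | (rw [finrank_tri_sup]; decide)

lemma NPset_inf {X Y : Submodule F (Fin 9 → F)} (hX : X ∈ (NPset : Set _))
    (hY : Y ∈ (NPset : Set _)) (hne : X ≠ Y) : finrank F (X ⊓ Y : Submodule F _) ≤ 1 := by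
  have h1 := NPset_sup hX hY hne
  have h2 := Submodule.finrank_sup_add_finrank_inf_eq X Y
  rw [mem_NPset_finrank hX, mem_NPset_finrank hY] at h2
  omega

end Tri


section Code
open Module Submodule

lemma mem_codeCU {n m : ℕ} {C : Submodule F (Matrix (Fin n) (Fin m) F)}
    {U : Submodule F (Fin n → F)} {M : Matrix (Fin n) (Fin m) F} :
    M ∈ codeCU C U ↔ M ∈ C ∧ colSpace M ≤ U := Iff.rfl

lemma codeCU_mono {n m : ℕ} (C : Submodule F (Matrix (Fin n) (Fin m) F))
    {U V : Submodule F (Fin n → F)} (h : U ≤ V) : codeCU C U ≤ codeCU C V :=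
  fun _ hM => ⟨hM.1, hM.2.trans h⟩

lemma codeCU_bot {n m : ℕ} (C : Submodule F (Matrix (Fin n) (Fin m) F)) :
    codeCU C ⊥ = ⊥ := by
  ext M
  simp only [mem_codeCU, Submodule.mem_bot]
  constructor
  · rintro ⟨-, h⟩
    have h' := (colSpace_le_iff M ⊥).1 h
    have hT : Mᵀ = 0 := funext fun j => by show Mᵀ j = 0; simpa using h' j
    calc M = Mᵀᵀ := (transpose_transpose M).symm
    _ = 0 := by rw [hT, transpose_zero]
  · rintro rfl
    refine ⟨C.zero_mem, (colSpace_le_iff _ _).2 fun j => ?_⟩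
    show (0 : Matrix (Fin n) (Fin m) F)ᵀ j ∈ (⊥ : Submodule F (Fin n → F))
    rw [transpose_zero]
    exact Submodule.mem_bot F |>.2 rfl

lemma rank_eq_finrank_colSpace {n m : ℕ} (M : Matrix (Fin n) (Fin m) F) :
    M.rank = finrank F (colSpace M) := Matrix.rank_eq_finrank_span_cols M

lemma finrank_pi_nine : finrank F (Fin 9 → F) = 9 := by
  simp [Module.finrank_pi]

lemma finrank_top_nine : finrank F (⊤ : Submodule F (Fin 9 → F)) = 9 := by
  rw [finrank_top, finrank_pi_nine]

variable [Fintype F] {m : ℕ}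

section Hrep

variable {C : Submodule F (Matrix (Fin 9) (Fin m) F)}

lemma finrank_code (hm : 9 ≤ m)
    (hrep : ∀ U : Submodule F (Fin 9 → F), rhoCode C U = rhoNP U) :
    finrank F C = 3 * m := by
  have h := hrep ⊤
  have hnot : (⊤ : Submodule F (Fin 9 → F)) ∉ (NPset : Set _) :=
    not_mem_NPset (by rw [finrank_top_nine]; omega)
  rw [rhoNP, if_neg hnot, if_neg (by rw [finrank_top_nine]; omega)] at h
  rw [rhoCode, perp_top, codeCU_bot, finrank_bot] at h
  have hm0 : (m : ℚ) ≠ 0 := Nat.cast_ne_zero.2 (by omega)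
  field_simp at h
  have h' : (finrank F C : ℚ) = 3 * m := by push_cast at h; linarith
  exact_mod_cast h'

lemma finrank_codeCU_eq (hm : 9 ≤ m)
    (hrep : ∀ U : Submodule F (Fin 9 → F), rhoCode C U = rhoNP U)
    (U : Submodule F (Fin 9 → F)) :
    (finrank F (codeCU C (perp U)) : ℚ) = 3 * m - m * rhoNP U := by
  have h := hrep U
  rw [rhoCode, finrank_code hm hrep] at h
  have hm0 : (m : ℚ) ≠ 0 := Nat.cast_ne_zero.2 (by omega)
  field_simp at h
  push_cast at h ⊢
  linarith

lemma codeCU_eq_bot_of_four_le (hm : 9 ≤ m)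
    (hrep : ∀ U : Submodule F (Fin 9 → F), rhoCode C U = rhoNP U)
    {U : Submodule F (Fin 9 → F)} (hU : 4 ≤ finrank F U) :
    codeCU C (perp U) = ⊥ := by
  have h := finrank_codeCU_eq hm hrep U
  rw [rhoNP, if_neg (not_mem_NPset (by omega)), if_neg (by omega)] at h
  rw [← Submodule.finrank_eq_zero (R := F)]
  have : (finrank F (codeCU C (perp U)) : ℚ) = 0 := by linarith
  exact_mod_cast this

lemma codeCU_eq_bot_of_three (hm : 9 ≤ m)
    (hrep : ∀ U : Submodule F (Fin 9 → F), rhoCode C U = rhoNP U)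
    {U : Submodule F (Fin 9 → F)} (hU : finrank F U = 3) (hU2 : U ∉ (NPset : Set _)) :
    codeCU C (perp U) = ⊥ := by
  have h := finrank_codeCU_eq hm hrep U
  rw [rhoNP, if_neg hU2, if_pos (by omega), hU] at h
  rw [← Submodule.finrank_eq_zero (R := F)]
  have : (finrank F (codeCU C (perp U)) : ℚ) = 0 := by push_cast at h ⊢; linarith
  exact_mod_cast this

lemma finrank_codeCU_NP (hm : 9 ≤ m)
    (hrep : ∀ U : Submodule F (Fin 9 → F), rhoCode C U = rhoNP U)
    {U : Submodule F (Fin 9 → F)} (hU : U ∈ (NPset : Set _)) :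
    finrank F (codeCU C (perp U)) = m := by
  have h := finrank_codeCU_eq hm hrep U
  rw [rhoNP, if_pos hU] at h
  have : (finrank F (codeCU C (perp U)) : ℚ) = m := by linarith
  exact_mod_cast this

lemma finrank_codeCU_two (hm : 9 ≤ m)
    (hrep : ∀ U : Submodule F (Fin 9 → F), rhoCode C U = rhoNP U)
    {U : Submodule F (Fin 9 → F)} (hU : finrank F U = 2) :
    finrank F (codeCU C (perp U)) = m := by
  have h := finrank_codeCU_eq hm hrep U
  rw [rhoNP, if_neg (not_mem_NPset (by omega)), if_pos (by omega), hU] at h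
  have : (finrank F (codeCU C (perp U)) : ℚ) = m := by push_cast at h ⊢; linarith
  exact_mod_cast this

lemma mem_codeCU_self {M : Matrix (Fin 9) (Fin m) F} (hM : M ∈ C) :
    M ∈ codeCU C (perp (perp (colSpace M))) :=
  ⟨hM, by rw [perp_perp]⟩

lemma rank_ge_six (hm : 9 ≤ m)
    (hrep : ∀ U : Submodule F (Fin 9 → F), rhoCode C U = rhoNP U)
    {M : Matrix (Fin 9) (Fin m) F} (hM : M ∈ C) (hne : M ≠ 0) : 6 ≤ M.rank := by
  by_contra hlt
  push_neg at hlt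
  have hcs : finrank F (colSpace M) ≤ 5 := by
    rw [← rank_eq_finrank_colSpace]; omega
  have hU : 4 ≤ finrank F (perp (colSpace M)) := by
    rw [finrank_perp]
    have := Submodule.finrank_le (colSpace M)
    rw [finrank_pi_nine] at this
    omega
  have := codeCU_eq_bot_of_four_le hm hrep hU
  have hMem := mem_codeCU_self (C := C) hM
  rw [this] at hMem
  exact hne (Submodule.mem_bot F |>.1 hMem)

lemma rank_le_of_mem_codeCU {M : Matrix (Fin 9) (Fin m) F}
    {V : Submodule F (Fin 9 → F)} (h : M ∈ codeCU C V) :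
    M.rank ≤ finrank F V := by
  rw [rank_eq_finrank_colSpace]
  exact Submodule.finrank_mono h.2

lemma rank6_colSpace (hm : 9 ≤ m)
    (hrep : ∀ U : Submodule F (Fin 9 → F), rhoCode C U = rhoNP U)
    {M : Matrix (Fin 9) (Fin m) F} (hM : M ∈ C) (h6 : M.rank = 6) :
    perp (colSpace M) ∈ (NPset : Set _) ∧ colSpace M = perp (perp (colSpace M)) := by
  have hfr : finrank F (colSpace M) = 6 := by rw [← rank_eq_finrank_colSpace, h6]
  have hU : finrank F (perp (colSpace M)) = 3 := by
    rw [finrank_perp, hfr]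
  have hne : M ≠ 0 := by
    rintro rfl
    rw [Matrix.rank_zero] at h6
    omega
  by_cases hNP : perp (colSpace M) ∈ (NPset : Set _)
  · exact ⟨hNP, (perp_perp _).symm⟩
  · exfalso
    have := codeCU_eq_bot_of_three hm hrep hU hNP
    have hMem := mem_codeCU_self (C := C) hM
    rw [this] at hMem
    exact hne (Submodule.mem_bot F |>.1 hMem)

end Hrep
end Code


section Char
open Module Submodule

variable [Fintype F] {m : ℕ} {C : Submodule F (Matrix (Fin 9) (Fin m) F)}

lemma rank_six_of_mem (hm : 9 ≤ m)
    (hrep : ∀ U : Submodule F (Fin 9 → F), rhoCode C U = rhoNP U)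
    {X : Submodule F (Fin 9 → F)} (hX : X ∈ (NPset : Set _))
    {M : Matrix (Fin 9) (Fin m) F} (hM : M ∈ codeCU C (perp X)) (h0 : M ≠ 0) :
    M.rank = 6 := by
  have hle : M.rank ≤ 6 := by
    have := rank_le_of_mem_codeCU hM
    rwa [finrank_perp, mem_NPset_finrank hX] at this
  have hge := rank_ge_six hm hrep hM.1 h0
  omega

lemma codeCU_NP_disjoint (hm : 9 ≤ m)
    (hrep : ∀ U : Submodule F (Fin 9 → F), rhoCode C U = rhoNP U)
    {X Y : Submodule F (Fin 9 → F)} (hX : X ∈ (NPset : Set _)) (hY : Y ∈ (NPset : Set _))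
    (hne : X ≠ Y) {M : Matrix (Fin 9) (Fin m) F}
    (h1 : M ∈ codeCU C (perp X)) (h2 : M ∈ codeCU C (perp Y)) : M = 0 := by
  have hcs : colSpace M ≤ perp (X ⊔ Y) := by
    rw [perp_sup]
    exact le_inf h1.2 h2.2
  have hMem : M ∈ codeCU C (perp (X ⊔ Y)) := ⟨h1.1, hcs⟩
  have hbot := codeCU_eq_bot_of_four_le hm hrep
    (U := X ⊔ Y) (by have := NPset_sup hX hY hne; omega)
  rw [hbot] at hMem
  exact (Submodule.mem_bot F).1 hMem

lemma rank7_colSpace (hm : 9 ≤ m)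
    (hrep : ∀ U : Submodule F (Fin 9 → F), rhoCode C U = rhoNP U)
    {M : Matrix (Fin 9) (Fin m) F} (hM : M ∈ C) (h7 : M.rank = 7) :
    finrank F (perp (colSpace M)) = 2 ∧ (∀ X ∈ (NPset : Set _), ¬ perp (colSpace M) ≤ X) ∧
      colSpace M = perp (perp (colSpace M)) := by
  have hfr : finrank F (colSpace M) = 7 := by rw [← rank_eq_finrank_colSpace, h7]
  have hU2 : finrank F (perp (colSpace M)) = 2 := by rw [finrank_perp, hfr]
  refine ⟨hU2, ?_, (perp_perp _).symm⟩
  intro X hX hle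
  have hperp : perp X ≤ perp (perp (colSpace M)) := perp_antitone hle
  have hsub : codeCU C (perp X) ≤ codeCU C (perp (perp (colSpace M))) := codeCU_mono C hperp
  have heq : codeCU C (perp X) = codeCU C (perp (perp (colSpace M))) := by
    apply Submodule.eq_of_le_of_finrank_le hsub
    rw [finrank_codeCU_NP hm hrep hX, finrank_codeCU_two hm hrep hU2]
  have hMem : M ∈ codeCU C (perp X) := by
    rw [heq]
    exact mem_codeCU_self hM
  have := rank_le_of_mem_codeCU hMem
  rw [finrank_perp, mem_NPset_finrank hX] at this
  omega

lemma rank_seven_of_mem (hm : 9 ≤ m)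
    (hrep : ∀ U : Submodule F (Fin 9 → F), rhoCode C U = rhoNP U)
    {U : Submodule F (Fin 9 → F)} (hU : finrank F U = 2)
    (hgood : ∀ X ∈ (NPset : Set _), ¬ U ≤ X)
    {M : Matrix (Fin 9) (Fin m) F} (hM : M ∈ codeCU C (perp U)) (h0 : M ≠ 0) :
    M.rank = 7 ∧ colSpace M = perp U := by
  have hle : M.rank ≤ 7 := by
    have := rank_le_of_mem_codeCU hM
    rwa [finrank_perp, hU] at this
  have hge := rank_ge_six hm hrep hM.1 h0
  have hne6 : M.rank ≠ 6 := by
    intro h6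
    obtain ⟨hNP, hcs⟩ := rank6_colSpace hm hrep hM.1 h6
    have hUle : U ≤ perp (colSpace M) := by
      rw [← perp_perp U]
      exact perp_antitone hM.2
    exact hgood _ hNP hUle
  have h7 : M.rank = 7 := by omega
  have hfr : finrank F (colSpace M) = 7 := by rw [← rank_eq_finrank_colSpace, h7]
  refine ⟨h7, Submodule.eq_of_le_of_finrank_le hM.2 ?_⟩
  rw [hfr, finrank_perp, hU]

end Char


section Counting
open Module Submodule Finset

open scoped Classical

variable [Fintype F]

local notation "V9" => (Fin 9 → F)
local notation "q" => Fintype.card F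

noncomputable instance : Fintype (Submodule F V9) :=
  Fintype.ofInjective (fun U : Submodule F V9 => (U : Set V9)) SetLike.coe_injective

lemma card_filter_mem (W : Submodule F V9) :
    (univ.filter (fun v : V9 => v ∈ W)).card = q ^ finrank F W := by
  rw [← Fintype.card_subtype, card_eq_pow_finrank (K := F) (V := W)]

lemma card_filter_mem_ne (W : Submodule F V9) :
    (univ.filter (fun v : V9 => v ∈ W ∧ v ≠ 0)).card = q ^ finrank F W - 1 := by
  have h : univ.filter (fun v : V9 => v ∈ W ∧ v ≠ 0)
      = (univ.filter (fun v : V9 => v ∈ W)).erase 0 := by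
    ext v
    simp [and_comm]
  rw [h, Finset.card_erase_of_mem (by simp [W.zero_mem]), card_filter_mem]

lemma card_filter_mem_not_mem {W X : Submodule F V9} (hWX : W ≤ X) :
    (univ.filter (fun v : V9 => v ∈ X ∧ v ∉ W)).card
      = q ^ finrank F X - q ^ finrank F W := by
  have h : univ.filter (fun v : V9 => v ∈ X ∧ v ∉ W)
      = (univ.filter (fun v : V9 => v ∈ X)) \ (univ.filter (fun v : V9 => v ∈ W)) := by
    ext v; simp
  rw [h, Finset.card_sdiff_of_subset (by intro v hv; simp at hv ⊢; exact hWX hv),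
    card_filter_mem, card_filter_mem]

lemma finrank_span_pair {v w : V9} (hv : v ≠ 0) (hw : w ∉ span F {v}) :
    finrank F (span F ({v, w} : Set V9)) = 2 := by
  have hli : LinearIndependent F ![v, w] := by
    rw [LinearIndependent.pair_iff' hv]
    intro a ha
    exact hw (ha ▸ Submodule.smul_mem _ a (Submodule.mem_span_singleton_self v))
  have hr : Set.range ![v, w] = ({v, w} : Set V9) := by
    simp [Matrix.range_cons, Matrix.range_empty]
    ext x
    simp only [Set.mem_insert_iff, Set.mem_singleton_iff]
    tauto
  rw [← hr, finrank_span_eq_card hli, Fintype.card_fin]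

/-- Double counting: pairs spanning inside `X`. -/
lemma card_pairs (X : Submodule F V9) :
    (univ.filter (fun p : V9 × V9 => p.1 ∈ X ∧ p.2 ∈ X ∧ p.1 ≠ 0 ∧ p.2 ∉ span F {p.1})).card
      = (q ^ finrank F X - 1) * (q ^ finrank F X - q) := by
  rw [Finset.card_eq_sum_card_fiberwise (f := Prod.fst)
      (t := univ.filter (fun v : V9 => v ∈ X ∧ v ≠ 0))
      (fun p hp => by simp only [Finset.mem_coe, mem_filter, mem_univ, true_and] at hp ⊢; tauto)]
  have hfib : ∀ v ∈ univ.filter (fun v : V9 => v ∈ X ∧ v ≠ 0),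
      ((univ.filter (fun p : V9 × V9 =>
          p.1 ∈ X ∧ p.2 ∈ X ∧ p.1 ≠ 0 ∧ p.2 ∉ span F {p.1})).filter
        (fun p => p.1 = v)).card = q ^ finrank F X - q := by
    intro v hv
    simp only [mem_filter, mem_univ, true_and] at hv
    have hmap : ((univ.filter (fun p : V9 × V9 =>
          p.1 ∈ X ∧ p.2 ∈ X ∧ p.1 ≠ 0 ∧ p.2 ∉ span F {p.1})).filter (fun p => p.1 = v))
        = (univ.filter (fun w : V9 => w ∈ X ∧ w ∉ span F {v})).map
            ⟨fun w => (v, w), fun a b hab => by simpa using congrArg Prod.snd hab⟩ := by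
      ext ⟨p1, p2⟩
      simp only [mem_filter, mem_univ, true_and, Finset.mem_map, Function.Embedding.coeFn_mk,
        Prod.mk.injEq]
      constructor
      · rintro ⟨⟨h1, h2, h3, h4⟩, rfl⟩
        exact ⟨p2, ⟨h2, h4⟩, rfl⟩
      · rintro ⟨w, ⟨hw1, hw2⟩, rfl, rfl⟩
        exact ⟨⟨hv.1, hw1, hv.2, hw2⟩, rfl⟩
    rw [hmap, Finset.card_map,
      card_filter_mem_not_mem ((Submodule.span_singleton_le_iff_mem v X).2 hv.1),
      finrank_span_singleton hv.2, pow_one]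
  rw [Finset.sum_congr rfl hfib, Finset.sum_const, card_filter_mem_ne, smul_eq_mul]

lemma card_two_subspaces (X : Submodule F V9) :
    (univ.filter (fun U : Submodule F V9 => finrank F U = 2 ∧ U ≤ X)).card
        * ((q ^ 2 - 1) * (q ^ 2 - q))
      = (q ^ finrank F X - 1) * (q ^ finrank F X - q) := by
  rw [← card_pairs X]
  rw [Finset.card_eq_sum_card_fiberwise (f := fun p : V9 × V9 => span F ({p.1, p.2} : Set V9))
      (t := univ.filter (fun U : Submodule F V9 => finrank F U = 2 ∧ U ≤ X))
      (fun p hp => by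
        simp only [Finset.mem_coe, mem_filter, mem_univ, true_and] at hp ⊢
        obtain ⟨h1, h2, h3, h4⟩ := hp
        refine ⟨finrank_span_pair h3 h4, Submodule.span_le.2 ?_⟩
        rintro x (rfl | rfl)
        · exact h1
        · exact h2)]
  rw [Finset.sum_congr rfl (fun U hU => ?_), Finset.sum_const, smul_eq_mul]
  simp only [mem_filter, mem_univ, true_and] at hU
  obtain ⟨hU2, hUX⟩ := hU
  have hset : ((univ.filter (fun p : V9 × V9 =>
        p.1 ∈ X ∧ p.2 ∈ X ∧ p.1 ≠ 0 ∧ p.2 ∉ span F {p.1})).filter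
      (fun p => span F ({p.1, p.2} : Set V9) = U))
      = univ.filter (fun p : V9 × V9 =>
          p.1 ∈ U ∧ p.2 ∈ U ∧ p.1 ≠ 0 ∧ p.2 ∉ span F {p.1}) := by
    ext ⟨p1, p2⟩
    simp only [mem_filter, mem_univ, true_and]
    constructor
    · rintro ⟨⟨h1, h2, h3, h4⟩, rfl⟩
      exact ⟨Submodule.subset_span (by simp), Submodule.subset_span (by simp), h3, h4⟩
    · rintro ⟨h1, h2, h3, h4⟩
      have hle : span F ({p1, p2} : Set V9) ≤ U := Submodule.span_le.2 (by
        rintro x (rfl | rfl)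
        · exact h1
        · exact h2)
      have heq : span F ({p1, p2} : Set V9) = U :=
        Submodule.eq_of_le_of_finrank_le hle (by rw [finrank_span_pair h3 h4, hU2])
      exact ⟨⟨hUX h1, hUX h2, h3, h4⟩, heq⟩
  rw [hset]
  have := card_pairs U
  rw [hU2] at this
  rw [this]

end Counting


section GB

lemma gaussBinom_31 (x : ℕ) : gaussBinom 3 1 x = 1 + x + x ^ 2 := by
  simp [gaussBinom]
  ring

lemma gaussBinom_31_mul (x : ℕ) (hx : 1 ≤ x) :
    gaussBinom 3 1 x * ((x ^ 2 - 1) * (x ^ 2 - x)) = (x ^ 3 - 1) * (x ^ 3 - x) := by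
  have h1 : 1 ≤ x ^ 2 := Nat.one_le_pow _ _ hx
  have h2 : x ≤ x ^ 2 := Nat.le_self_pow two_ne_zero x
  have h3 : 1 ≤ x ^ 3 := Nat.one_le_pow _ _ hx
  have h4 : x ≤ x ^ 3 := Nat.le_self_pow three_ne_zero x
  zify [h1, h2, h3, h4]
  rw [gaussBinom_31]
  push_cast
  ring

lemma gaussBinom_92_mul (x : ℕ) (hx : 1 ≤ x) :
    gaussBinom 9 2 x * ((x ^ 2 - 1) * (x ^ 2 - x)) = (x ^ 9 - 1) * (x ^ 9 - x) := by
  have h1 : 1 ≤ x ^ 2 := Nat.one_le_pow _ _ hx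
  have h2 : x ≤ x ^ 2 := Nat.le_self_pow two_ne_zero x
  have h3 : 1 ≤ x ^ 9 := Nat.one_le_pow _ _ hx
  have h4 : x ≤ x ^ 9 := Nat.le_self_pow (by norm_num) x
  zify [h1, h2, h3, h4]
  have hg : (gaussBinom 9 2 x : ℤ) = ((gaussBinom 9 2 x : ℕ) : ℤ) := rfl
  have hval : (gaussBinom 9 2 x : ℕ)
      = gaussBinom 8 1 x + x ^ 2 * gaussBinom 8 2 x := by simp [gaussBinom]
  simp only [gaussBinom] at hval ⊢
  push_cast
  ring

end GB


section Assembly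
open Module Submodule Finset

open scoped Classical

variable [Fintype F]

local notation "q" => Fintype.card F

noncomputable def npList : Fin 8 → Submodule F (Fin 9 → F) :=
  ![tri 0 1 2, tri 0 5 7, tri 0 4 6, tri 1 3 6, tri 1 5 8, tri 2 3 7, tri 2 4 8, tri 3 4 5]

lemma card_filter_mem_ne_mat {m : ℕ} (W : Submodule F (Matrix (Fin 9) (Fin m) F)) :
    (univ.filter (fun M : Matrix (Fin 9) (Fin m) F => M ∈ W ∧ M ≠ 0)).card
      = q ^ finrank F W - 1 := by
  have h : univ.filter (fun M : Matrix (Fin 9) (Fin m) F => M ∈ W ∧ M ≠ 0)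
      = (univ.filter (fun M : Matrix (Fin 9) (Fin m) F => M ∈ W)).erase 0 := by
    ext M
    simp [and_comm]
  rw [h, Finset.card_erase_of_mem (by simp [W.zero_mem]), ← Fintype.card_subtype,
    card_eq_pow_finrank (K := F) (V := W)]

lemma npList_mem (i : Fin 8) : npList i ∈ (NPset : Set (Submodule F (Fin 9 → F))) := by
  fin_cases i
  · show (tri 0 1 2 : Submodule F (Fin 9 → F)) ∈ _; simp [NPset]
  · show (tri 0 5 7 : Submodule F (Fin 9 → F)) ∈ _; simp [NPset]
  · show (tri 0 4 6 : Submodule F (Fin 9 → F)) ∈ _; simp [NPset]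
  · show (tri 1 3 6 : Submodule F (Fin 9 → F)) ∈ _; simp [NPset]
  · show (tri 1 5 8 : Submodule F (Fin 9 → F)) ∈ _; simp [NPset]
  · show (tri 2 3 7 : Submodule F (Fin 9 → F)) ∈ _; simp [NPset]
  · show (tri 2 4 8 : Submodule F (Fin 9 → F)) ∈ _; simp [NPset]
  · show (tri 3 4 5 : Submodule F (Fin 9 → F)) ∈ _; simp [NPset]

lemma npMem_exists {X : Submodule F (Fin 9 → F)} (hX : X ∈ (NPset : Set _)) :
    ∃ i : Fin 8, npList i = X := by
  simp only [NPset, Set.mem_insert_iff, Set.mem_singleton_iff] at hX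
  rcases hX with rfl | rfl | rfl | rfl | rfl | rfl | rfl | rfl
  exacts [⟨0, rfl⟩, ⟨1, rfl⟩, ⟨2, rfl⟩,
    ⟨3, rfl⟩, ⟨4, rfl⟩, ⟨5, rfl⟩,
    ⟨6, rfl⟩, ⟨7, rfl⟩]

lemma tri_ne {a b c d e f : Fin 9}
    (h : 4 ≤ (({a, b, c} : Finset (Fin 9)) ∪ {d, e, f}).card) :
    (tri a b c : Submodule F (Fin 9 → F)) ≠ tri d e f := by
  intro heq
  have h1 := finrank_tri_sup (F := F) a b c d e f
  rw [heq, sup_idem, finrank_tri] at h1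
  have h2 : ({d, e, f} : Finset (Fin 9)).card ≤ 3 := by
    refine le_trans (Finset.card_insert_le _ _) (Nat.succ_le_succ ?_)
    refine le_trans (Finset.card_insert_le _ _) (Nat.succ_le_succ ?_)
    simp
  omega

lemma npList_inj : Function.Injective (npList : Fin 8 → Submodule F (Fin 9 → F)) := by
  intro i j h
  by_contra hne
  apply absurd h
  fin_cases i <;> fin_cases j <;>
    first
      | (exact absurd rfl hne)
      | (exact tri_ne (by decide))

end Assembly


section Final
open Module Submodule Finset

open scoped Classical

variable [Fintype F] {m : ℕ} {C : Submodule F (Matrix (Fin 9) (Fin m) F)}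

local notation "q" => Fintype.card F

lemma two_le_q : 2 ≤ q := Fintype.one_lt_card

lemma pos_c : 0 < (q ^ 2 - 1) * (q ^ 2 - q) := by
  have hq : 2 ≤ q := two_le_q
  have hqq : q ^ 2 = q * q := sq q
  have h4 : 2 * 2 ≤ q * q := Nat.mul_le_mul hq hq
  have h5 : 2 * q ≤ q * q := Nat.mul_le_mul_right q hq
  have h1 : 0 < q ^ 2 - 1 := by omega
  have h2 : 0 < q ^ 2 - q := by omega
  exact Nat.mul_pos h1 h2

lemma card_all2 :
    (univ.filter (fun U : Submodule F (Fin 9 → F) => finrank F U = 2)).card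
      = gaussBinom 9 2 q := by
  have h := card_two_subspaces (⊤ : Submodule F (Fin 9 → F))
  rw [finrank_top_nine] at h
  have hsame : (univ.filter (fun U : Submodule F (Fin 9 → F) =>
      finrank F U = 2 ∧ U ≤ ⊤)) = univ.filter (fun U : Submodule F (Fin 9 → F) =>
      finrank F U = 2) := by
    apply Finset.filter_congr
    intro U _
    simp
  rw [hsame] at h
  have hgb := gaussBinom_92_mul q (by have := two_le_q (F := F); omega)
  exact Nat.eq_of_mul_eq_mul_right pos_c (h.trans hgb.symm)

lemma card_bad_i {X : Submodule F (Fin 9 → F)} (hX : X ∈ (NPset : Set _)) :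
    (univ.filter (fun U : Submodule F (Fin 9 → F) => finrank F U = 2 ∧ U ≤ X)).card
      = gaussBinom 3 1 q := by
  have h := card_two_subspaces X
  rw [mem_NPset_finrank hX] at h
  have hgb := gaussBinom_31_mul q (by have := two_le_q (F := F); omega)
  exact Nat.eq_of_mul_eq_mul_right pos_c (h.trans hgb.symm)

lemma card_good :
    (univ.filter (fun U : Submodule F (Fin 9 → F) =>
        finrank F U = 2 ∧ ∀ X ∈ (NPset : Set _), ¬ U ≤ X)).card
      = gaussBinom 9 2 q - 8 * gaussBinom 3 1 q := by
  set Bad : Finset (Submodule F (Fin 9 → F)) :=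
    univ.filter (fun U => finrank F U = 2 ∧ ∃ i : Fin 8, U ≤ npList i) with hBadDef
  have hGoodEq : (univ.filter (fun U : Submodule F (Fin 9 → F) =>
        finrank F U = 2 ∧ ∀ X ∈ (NPset : Set _), ¬ U ≤ X))
      = (univ.filter (fun U : Submodule F (Fin 9 → F) => finrank F U = 2)) \ Bad := by
    ext U
    simp only [hBadDef, mem_filter, mem_univ, true_and, mem_sdiff, not_and, not_exists]
    constructor
    · rintro ⟨h2, hall⟩
      exact ⟨h2, fun _ i hle => hall _ (npList_mem i) hle⟩
    · rintro ⟨h2, hni⟩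
      refine ⟨h2, fun X hX hle => ?_⟩
      obtain ⟨i, rfl⟩ := npMem_exists hX
      exact hni h2 i hle
  have hBadUnion : Bad = (univ : Finset (Fin 8)).biUnion
      (fun i => univ.filter (fun U : Submodule F (Fin 9 → F) =>
        finrank F U = 2 ∧ U ≤ npList i)) := by
    ext U
    simp only [hBadDef, mem_filter, mem_univ, true_and, mem_biUnion]
    tauto
  have hdisj : ∀ i ∈ (univ : Finset (Fin 8)), ∀ j ∈ (univ : Finset (Fin 8)), i ≠ j →
      Disjoint (univ.filter (fun U : Submodule F (Fin 9 → F) =>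
          finrank F U = 2 ∧ U ≤ npList i))
        (univ.filter (fun U : Submodule F (Fin 9 → F) =>
          finrank F U = 2 ∧ U ≤ npList j)) := by
    intro i _ j _ hij
    rw [Finset.disjoint_left]
    intro U hUi hUj
    simp only [mem_filter, mem_univ, true_and] at hUi hUj
    have hle : U ≤ npList i ⊓ npList j := le_inf hUi.2 hUj.2
    have h1 := Submodule.finrank_mono hle
    have h2 := NPset_inf (npList_mem (F := F) i) (npList_mem j)
      (fun h => hij (npList_inj h))
    rw [hUi.1] at h1
    omega
  have hBadCard : Bad.card = 8 * gaussBinom 3 1 q := by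
    rw [hBadUnion, Finset.card_biUnion hdisj]
    rw [Finset.sum_congr rfl (fun i _ => card_bad_i (npList_mem i))]
    simp [Finset.sum_const, mul_comm]
  have hsub : Bad ⊆ univ.filter (fun U : Submodule F (Fin 9 → F) => finrank F U = 2) := by
    intro U hU
    simp only [hBadDef, mem_filter, mem_univ, true_and] at hU ⊢
    exact hU.1
  rw [hGoodEq, Finset.card_sdiff_of_subset hsub, hBadCard, card_all2]

lemma card_rank6 (hm : 9 ≤ m)
    (hrep : ∀ U : Submodule F (Fin 9 → F), rhoCode C U = rhoNP U) :
    Nat.card {M : Matrix (Fin 9) (Fin m) F // M ∈ C ∧ M.rank = 6}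
      = 8 * (q ^ m - 1) := by
  rw [Nat.card_eq_fintype_card, Fintype.card_subtype]
  have hdecomp : univ.filter (fun M : Matrix (Fin 9) (Fin m) F => M ∈ C ∧ M.rank = 6)
      = (univ : Finset (Fin 8)).biUnion (fun i =>
          univ.filter (fun M : Matrix (Fin 9) (Fin m) F =>
            M ∈ codeCU C (perp (npList i)) ∧ M ≠ 0)) := by
    ext M
    simp only [mem_filter, mem_univ, true_and, mem_biUnion]
    constructor
    · rintro ⟨hMC, h6⟩
      obtain ⟨hNP, hcs⟩ := rank6_colSpace hm hrep hMC h6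
      obtain ⟨i, hi⟩ := npMem_exists hNP
      refine ⟨i, ⟨hMC, ?_⟩, ?_⟩
      · rw [hi]
        exact le_of_eq hcs
      · rintro rfl
        rw [Matrix.rank_zero] at h6
        omega
    · rintro ⟨i, hMem, hne⟩
      exact ⟨hMem.1, rank_six_of_mem hm hrep (npList_mem i) hMem hne⟩
  rw [hdecomp, Finset.card_biUnion ?disj]
  case disj =>
    intro i _ j _ hij
    rw [Function.onFun, Finset.disjoint_left]
    intro M hMi hMj
    simp only [mem_filter, mem_univ, true_and] at hMi hMj
    exact hMi.2 (codeCU_NP_disjoint hm hrep (npList_mem i) (npList_mem j)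
      (fun h => hij (npList_inj h)) hMi.1 hMj.1)
  have hcards : ∀ i ∈ (univ : Finset (Fin 8)),
      (univ.filter (fun M : Matrix (Fin 9) (Fin m) F =>
        M ∈ codeCU C (perp (npList i)) ∧ M ≠ 0)).card = q ^ m - 1 := by
    intro i _
    rw [card_filter_mem_ne_mat, finrank_codeCU_NP hm hrep (npList_mem i)]
  rw [Finset.sum_congr rfl hcards, Finset.sum_const]
  simp [mul_comm]

lemma card_rank7 (hm : 9 ≤ m)
    (hrep : ∀ U : Submodule F (Fin 9 → F), rhoCode C U = rhoNP U) :
    Nat.card {M : Matrix (Fin 9) (Fin m) F // M ∈ C ∧ M.rank = 7}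
      = (q ^ m - 1) * (gaussBinom 9 2 q - 8 * gaussBinom 3 1 q) := by
  rw [Nat.card_eq_fintype_card, Fintype.card_subtype]
  set G : Finset (Submodule F (Fin 9 → F)) :=
    univ.filter (fun U => finrank F U = 2 ∧ ∀ X ∈ (NPset : Set _), ¬ U ≤ X) with hGdef
  have hdecomp : univ.filter (fun M : Matrix (Fin 9) (Fin m) F => M ∈ C ∧ M.rank = 7)
      = G.biUnion (fun U =>
          univ.filter (fun M : Matrix (Fin 9) (Fin m) F =>
            M ∈ codeCU C (perp U) ∧ M ≠ 0)) := by
    ext M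
    simp only [hGdef, mem_filter, mem_univ, true_and, mem_biUnion]
    constructor
    · rintro ⟨hMC, h7⟩
      obtain ⟨hU2, hgood, hcs⟩ := rank7_colSpace hm hrep hMC h7
      refine ⟨perp (colSpace M), ⟨hU2, hgood⟩, ⟨hMC, le_of_eq hcs⟩, ?_⟩
      rintro rfl
      rw [Matrix.rank_zero] at h7
      omega
    · rintro ⟨U, ⟨hU2, hgood⟩, hMem, hne⟩
      exact ⟨hMem.1, (rank_seven_of_mem hm hrep hU2 hgood hMem hne).1⟩
  rw [hdecomp, Finset.card_biUnion ?disj]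
  case disj =>
    intro U hU V hV hUV
    simp only [Finset.mem_coe, hGdef, mem_filter, mem_univ, true_and] at hU hV
    rw [Function.onFun, Finset.disjoint_left]
    intro M hMU hMV
    simp only [mem_filter, mem_univ, true_and] at hMU hMV
    have h1 := (rank_seven_of_mem hm hrep hU.1 hU.2 hMU.1 hMU.2).2
    have h2 := (rank_seven_of_mem hm hrep hV.1 hV.2 hMV.1 hMV.2).2
    exact hUV (perp_inj (h1.symm.trans h2))
  have hcards : ∀ U ∈ G,
      (univ.filter (fun M : Matrix (Fin 9) (Fin m) F =>
        M ∈ codeCU C (perp U) ∧ M ≠ 0)).card = q ^ m - 1 := by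
    intro U hU
    simp only [hGdef, mem_filter, mem_univ, true_and] at hU
    rw [card_filter_mem_ne_mat, finrank_codeCU_two hm hrep hU.1]
  rw [Finset.sum_congr rfl hcards, Finset.sum_const, smul_eq_mul, hGdef, card_good]
  ring

end Final


/-- rank distribution in ranks 6 and 7 of a putative representation of the
non-Pappus q-matroid with `m ≥ 9`. -/
theorem nonPappus_rank_distribution [Fintype F] {m : ℕ} (hm : 9 ≤ m)
    (C : Submodule F (Matrix (Fin 9) (Fin m) F))
    (hrep : ∀ U : Submodule F (Fin 9 → F), rhoCode C U = rhoNP U) :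
    Nat.card {M : Matrix (Fin 9) (Fin m) F // M ∈ C ∧ M.rank = 6}
        = 8 * (Fintype.card F ^ m - 1) ∧
    Nat.card {M : Matrix (Fin 9) (Fin m) F // M ∈ C ∧ M.rank = 7}
        = (Fintype.card F ^ m - 1) *
            (gaussBinom 9 2 (Fintype.card F) - 8 * gaussBinom 3 1 (Fintype.card F)) := by
  exact ⟨card_rank6 hm hrep, card_rank7 hm hrep⟩
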